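/- Let D and D' be Lagrangian subspaces of E and S an isotropic subspace with S ⊆ D'. Then D' ∩ D = D^S ∩ D if and only if D' = D^S, where D^S := (D ∩ S^⊥) + S. -/

import Mathlib

/-- The orthogonal of a subspace `A` with respect to a bilinear form `B`:
`{e | ∀ a ∈ A, B e a = 0}`. -/
def bilinPerp {E : Type*} [AddCommGroup E] [Module ℝ E]
    (B : E →ₗ[ℝ] E →ₗ[ℝ] ℝ) (A : Submodule ℝ E) : Submodule ℝ E where
  carrier := {e | ∀ a ∈ A, B e a = 0}
  add_mem' := by
    intro x y hx hy a ha
    simp only [Set.mem_setOf_eq] at *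
    rw [map_add, LinearMap.add_apply, hx a ha, hy a ha, add_zero]
  zero_mem' := by
    intro a ha
    simp
  smul_mem' := by
    intro c x hx a ha
    simp only [Set.mem_setOf_eq] at *
    rw [map_smul, LinearMap.smul_apply, hx a ha, smul_zero]

lemma bilinPerp_eq_orthogonal {E : Type*} [AddCommGroup E] [Module ℝ E]
    (B : E →ₗ[ℝ] E →ₗ[ℝ] ℝ) (hsymm : ∀ x y : E, B x y = B y x) (A : Submodule ℝ E) :
    bilinPerp B A = LinearMap.BilinForm.orthogonal B A := by
  ext x
  simp only [LinearMap.BilinForm.mem_orthogonal_iff, LinearMap.BilinForm.IsOrtho]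
  constructor
  · intro h a ha; rw [hsymm]; exact h a ha
  · intro h a ha; rw [hsymm]; exact h a ha

/-- Let `D` and `D'` be Lagrangian subspaces of `E` and `S` an isotropic
subspace with `S ⊆ D'`. Then `D' ∩ D = D^S ∩ D` if and only if `D' = D^S`, where
`D^S := (D ∩ S^⊥) + S`. -/
theorem stretching_closest_iff
    {E : Type*} [AddCommGroup E] [Module ℝ E] [FiniteDimensional ℝ E]
    (B : E →ₗ[ℝ] E →ₗ[ℝ] ℝ)
    (hsymm : ∀ x y : E, B x y = B y x)
    (hnondeg : ∀ x : E, (∀ y : E, B x y = 0) → x = 0)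
    (D D' S : Submodule ℝ E)
    (hD : bilinPerp B D = D)
    (hD' : bilinPerp B D' = D')
    (hS : S ≤ bilinPerp B S)
    (hSD' : S ≤ D') :
    D' ⊓ D = ((D ⊓ bilinPerp B S) ⊔ S) ⊓ D ↔ D' = (D ⊓ bilinPerp B S) ⊔ S := by
  set Bf : LinearMap.BilinForm ℝ E := B with hBf
  have hrefl : Bf.IsRefl := fun x y h => (hsymm x y) ▸ h
  have hnd : Bf.Nondegenerate := ⟨fun x h => hnondeg x h, fun y h => hnondeg y (fun x => (hsymm y x).trans (h x))⟩
  have hperp : ∀ A : Submodule ℝ E, bilinPerp B A = Bf.orthogonal A :=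
    bilinPerp_eq_orthogonal B hsymm
  -- rewrite everything via orthogonal
  rw [hperp] at hD hD' hS ⊢
  have pp : ∀ A : Submodule ℝ E, Bf.orthogonal (Bf.orthogonal A) = A :=
    fun A => Bf.orthogonal_orthogonal hnd hrefl A
  have psup : ∀ A C : Submodule ℝ E,
      Bf.orthogonal (A ⊔ C) = Bf.orthogonal A ⊓ Bf.orthogonal C := by
    intro A C
    apply le_antisymm
    · exact le_inf (Bf.orthogonal_le le_sup_left) (Bf.orthogonal_le le_sup_right)
    · intro x hx n hn
      obtain ⟨a, ha, c, hc, rfl⟩ := Submodule.mem_sup.mp hn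
      have h1 : Bf a x = 0 := hx.1 a ha
      have h2 : Bf c x = 0 := hx.2 c hc
      show Bf (a + c) x = 0
      rw [map_add, LinearMap.add_apply, h1, h2, add_zero]
  have pinf : ∀ A C : Submodule ℝ E,
      Bf.orthogonal (A ⊓ C) = Bf.orthogonal A ⊔ Bf.orthogonal C := by
    intro A C
    conv_lhs => rw [← pp A, ← pp C, ← psup, pp]
  constructor
  · intro h
    have hD'S : D' ≤ Bf.orthogonal S := by
      rw [← hD']; exact Bf.orthogonal_le hSD'
    -- D^S ∩ D = D ⊓ orth S
    have hmod1 : ((D ⊓ Bf.orthogonal S) ⊔ S) ⊓ D = D ⊓ Bf.orthogonal S := by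
      rw [sup_inf_assoc_of_le S inf_le_left]
      have : S ⊓ D ≤ D ⊓ Bf.orthogonal S := le_inf inf_le_right (inf_le_left.trans hS)
      exact sup_eq_left.mpr this
    rw [hmod1] at h
    have h2 : D' ⊔ D = D ⊔ S := by
      have := congrArg (Bf.orthogonal) h
      rw [pinf, pinf, hD', hD, pp] at this
      exact this
    have h3 : D' ≤ (D ⊓ Bf.orthogonal S) ⊔ S := by
      have hle : D' ≤ D ⊔ S := le_sup_left.trans h2.le
      have : D' ≤ (D ⊔ S) ⊓ Bf.orthogonal S := le_inf hle hD'S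
      rwa [sup_comm D S, sup_inf_assoc_of_le D hS, sup_comm S (D ⊓ Bf.orthogonal S)] at this
    -- D^S is Lagrangian
    have hLag : Bf.orthogonal ((D ⊓ Bf.orthogonal S) ⊔ S) = (D ⊓ Bf.orthogonal S) ⊔ S := by
      rw [psup, pinf, hD, pp]
      rw [sup_comm D S, sup_inf_assoc_of_le D hS, sup_comm S (D ⊓ Bf.orthogonal S)]
    have h4 : (D ⊓ Bf.orthogonal S) ⊔ S ≤ D' := by
      calc (D ⊓ Bf.orthogonal S) ⊔ S = Bf.orthogonal ((D ⊓ Bf.orthogonal S) ⊔ S) := hLag.symm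
        _ ≤ Bf.orthogonal D' := Bf.orthogonal_le h3
        _ = D' := hD'
    exact le_antisymm h3 h4
  · intro h; rw [h]
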